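/- If 1/((1+σ²)·2·ln(2)) < R < C, where C := (1/2)·log₂(1 + 1/σ²) is the Shannon capacity of the AWGN channel with snr = 1/σ², then E = 0 is the global minimum of the limiting potential φ_R on [0,1] (φ_R(E) > φ_R(0) for E ∈ (0,1]) and E = 1 is a local minimum of φ_R (there exists δ > 0 such that φ_R(E) ≥ φ_R(1) for all E ∈ [1−δ, 1]). -/

import Mathlib

open MeasureTheory ProbabilityTheory Filter Finset Real

noncomputable section

/-- Product of `B` i.i.d. standard Gaussians on `Fin B → ℝ` (law of `z`). -/
def stdGauss (B : ℕ) : Measure (Fin B → ℝ) :=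
  Measure.pi fun _ => gaussianReal 0 1

/-- The `j`-th standard basis vector of `ℝ^B` (a section). -/
def basisVec (B : ℕ) (j : Fin B) : Fin B → ℝ := fun k => if k = j then 1 else 0

/-- The MMSE denoiser `f_i(Σ)` of the effective Gaussian channel. -/
def denoiser (B : ℕ) (Sn : ℝ) (s z : Fin B → ℝ) (i : Fin B) : ℝ :=
  (1 + ∑ k ∈ Finset.univ.erase i,
      Real.exp ((s k - s i) * Real.logb 2 B / Sn ^ 2 +
        (z k - z i) * Real.sqrt (Real.logb 2 B) / Sn))⁻¹

/-- `E_{s,z}[ ∑_{i=1}^B (f_i(Σ) - s_i)^2 ]`, with `s` uniform over the basis vectors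
and `z` i.i.d. standard Gaussian: the MMSE of the effective `B`-dimensional channel. -/
def mmseB (B : ℕ) (Sn : ℝ) : ℝ :=
  (B : ℝ)⁻¹ * ∑ j : Fin B,
    ∫ z, (∑ i, (denoiser B Sn (basisVec B j) z i - basisVec B j i) ^ 2) ∂ stdGauss B

/-- Effective noise `Σ(E) = √(R(σ² + E))`. -/
def sigU (R σ2 E : ℝ) : ℝ := Real.sqrt (R * (σ2 + E))

/-- State evolution operator of the underlying system. -/
def Tu (B : ℕ) (R σ2 E : ℝ) : ℝ := mmseB B (sigU R σ2 E)

/-- Energy term of the underlying potential. -/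
def Uu (R σ2 E : ℝ) : ℝ :=
  (1 / (2 * R)) * Real.logb 2 ((σ2 + E) * Real.exp (-(E / (σ2 + E))))

/-- Entropy term of the underlying potential,
`S_u(Σ) = E_z[log_B(1 + ∑_{i=2}^B e_i(Σ))]`. -/
def Su (B : ℕ) (Sn : ℝ) : ℝ :=
  if h : 0 < B then
    letI : NeZero B := ⟨h.ne'⟩
    ∫ z, Real.logb B (1 + ∑ i ∈ Finset.univ.erase (0 : Fin B),
        Real.exp ((z i - z 0) * Real.sqrt (Real.logb 2 B) / Sn -
          Real.logb 2 B / Sn ^ 2)) ∂ stdGauss B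
  else 0

/-- Potential of the underlying system. -/
def Fu (B : ℕ) (R σ2 E : ℝ) : ℝ := Uu R σ2 E - Su B (sigU R σ2 E)

/-- The MSE floor `E₀ = lim_t T_u^{(t)}(0)`. -/
def mseFloor (B : ℕ) (R σ2 : ℝ) : ℝ :=
  limUnder atTop fun t : ℕ => (Tu B R σ2)^[t] 0

/-- Basin of attraction `𝒱₀` of the MSE floor. -/
def basin (B : ℕ) (R σ2 : ℝ) : Set ℝ :=
  {E | E ∈ Set.Icc (0:ℝ) 1 ∧
    Tendsto (fun t : ℕ => (Tu B R σ2)^[t] E) atTop (nhds (mseFloor B R σ2))}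

/-- Free energy gap `ΔF_u` (`+∞` if the complement of the basin is empty). -/
def gapFu (B : ℕ) (R σ2 : ℝ) : EReal :=
  ⨅ E ∈ Set.Icc (0:ℝ) 1 \ basin B R σ2,
    ((Fu B R σ2 E - Fu B R σ2 (mseFloor B R σ2) : ℝ) : EReal)

/-- Potential threshold `R_pot`. -/
def Rpot (B : ℕ) (σ2 : ℝ) : ℝ :=
  sSup {R : ℝ | 0 < R ∧ 0 < gapFu B R σ2}

/-- Effective noise `Σ_c(E)` of block `c` in the coupled system. -/
def sigC (R σ2 : ℝ) (Γ : ℕ) (J : Fin Γ → Fin Γ → ℝ) (E : Fin Γ → ℝ) (c : Fin Γ) : ℝ :=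
  (Real.sqrt ((Γ : ℝ)⁻¹ * ∑ r, J r c / (R * (σ2 + E r))))⁻¹

/-- Coupled state evolution operator `[T_c(E)]_r`. -/
def Tc (B : ℕ) (R σ2 : ℝ) (Γ : ℕ) (J : Fin Γ → Fin Γ → ℝ) (E : Fin Γ → ℝ) (r : Fin Γ) : ℝ :=
  (Γ : ℝ)⁻¹ * ∑ c, J r c * mmseB B (sigC R σ2 Γ J E c)

/-- Coupled potential `F_c`. -/
def Fc (B : ℕ) (R σ2 : ℝ) (Γ : ℕ) (J : Fin Γ → Fin Γ → ℝ) (E : Fin Γ → ℝ) : ℝ :=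
  (∑ r, Uu R σ2 (E r)) - ∑ c, Su B (sigC R σ2 Γ J E c)

/-- Shift operator: `[S(E)]_1 = E₀`, `[S(E)]_r = E_{r-1}` (0-based indexing). -/
def shiftProf (Γ : ℕ) (E0v : ℝ) (E : Fin Γ → ℝ) (r : Fin Γ) : ℝ :=
  if r.1 = 0 then E0v else E ⟨r.1 - 1, lt_of_le_of_lt (Nat.sub_le _ _) r.isLt⟩

/-- Partial derivative of a function of a profile with respect to coordinate `r`. -/
def pderiv (Γ : ℕ) (F : (Fin Γ → ℝ) → ℝ) (r : Fin Γ) (P : Fin Γ → ℝ) : ℝ :=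
  deriv (fun x => F (Function.update P r x)) (P r)

/-- Coupled SE operator with the pinning condition enforced on
`A = {1,…,3w} ∪ {Γ-3w+1,…,Γ}` (in 0-based indexing: `r < 3w` or `r ≥ Γ-3w`). -/
def TcPin (B : ℕ) (R σ2 : ℝ) (Γ w : ℕ) (J : Fin Γ → Fin Γ → ℝ) (E : Fin Γ → ℝ) (r : Fin Γ) : ℝ :=
  if r.1 < 3*w ∨ Γ - 3*w ≤ r.1 then 0 else Tc B R σ2 Γ J E r

/-- All-ones initial profile, pinned to `0` on the pinning set `A`. -/
def onesPin (Γ w : ℕ) : Fin Γ → ℝ :=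
  fun r => if r.1 < 3*w ∨ Γ - 3*w ≤ r.1 then 0 else 1

/-- Large section size (`B → ∞`) limit of the underlying potential. -/
def phiLim (R σ2 E : ℝ) : ℝ :=
  (1/(2*R)) * Real.logb 2 ((σ2 + E) * Real.exp (-(E/(σ2+E)))) -
    max 0 (1 - 1/(2 * Real.log 2 * R * (σ2 + E)))

/-- for `1/((1+σ²)·2·ln 2) < R < C`, `E = 0` is the global minimum of
the limiting potential on `[0,1]` and `E = 1` is a local minimum. -/
theorem phiLim_global_min_zero_local_min_one
    (R σ2 : ℝ) (hσ2 : 0 < σ2)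
    (hRlarge : 1 / ((1 + σ2) * (2 * Real.log 2)) < R)
    (hRC : R < (1/2) * Real.logb 2 (1 + 1/σ2)) :
    (∀ E ∈ Set.Ioc (0:ℝ) 1, phiLim R σ2 0 < phiLim R σ2 E) ∧
    (∃ δ > (0:ℝ), ∀ E ∈ Set.Icc (1 - δ) 1, phiLim R σ2 1 ≤ phiLim R σ2 E) := by
  have hlog2 : (0:ℝ) < Real.log 2 := Real.log_pos one_lt_two
  have hb : (0:ℝ) < σ2 + 1 := by linarith
  have hR : 0 < R := lt_trans (by positivity) hRlarge
  set c := 2 * Real.log 2 * R with hc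
  have hcpos : 0 < c := by positivity
  have hcb : 1 < c * (σ2 + 1) := by
    have h1 : 0 < (1 + σ2) * (2 * Real.log 2) := by positivity
    rw [div_lt_iff₀ h1] at hRlarge
    nlinarith
  have ha : ∀ E : ℝ, 0 ≤ E → 0 < σ2 + E := fun E hE => by linarith
  have hphi : ∀ E : ℝ, 0 ≤ E →
      phiLim R σ2 E = (Real.log (σ2+E) - E/(σ2+E))/c - max 0 (1 - 1/(c*(σ2+E))) := by
    intro E hE
    have haE := ha E hE
    unfold phiLim
    rw [Real.logb, Real.log_mul (ne_of_gt haE) (Real.exp_ne_zero _), Real.log_exp]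
    have hmaxeq : 2 * Real.log 2 * R * (σ2 + E) = c * (σ2 + E) := by rw [hc]
    rw [hmaxeq]
    congr 1
    rw [hc]
    field_simp
    ring
  -- Lemma A: on the region where the max is active, phiLim 1 ≤ phiLim E
  have hA : ∀ E : ℝ, 0 ≤ E → 1 ≤ c * (σ2 + E) → phiLim R σ2 1 ≤ phiLim R σ2 E := by
    intro E hE hca
    have haE := ha E hE
    rw [hphi E hE, hphi 1 zero_le_one]
    have hmaxE : max 0 (1 - 1/(c*(σ2+E))) = 1 - 1/(c*(σ2+E)) := by
      apply max_eq_right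
      have h1 : 1/(c*(σ2+E)) ≤ 1 := by
        rw [div_le_one (by positivity)]; exact hca
      linarith
    have hmax1 : max 0 (1 - 1/(c*(σ2+1))) = 1 - 1/(c*(σ2+1)) := by
      apply max_eq_right
      have h1 : 1/(c*(σ2+1)) ≤ 1 := by
        rw [div_le_one (by positivity)]; exact hcb.le
      linarith
    rw [hmaxE, hmax1]
    have hlog : Real.log ((σ2+1)/(σ2+E)) ≤ (σ2+1)/(σ2+E) - 1 :=
      Real.log_le_sub_one_of_pos (by positivity)
    rw [Real.log_div (ne_of_gt hb) (ne_of_gt haE)] at hlog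
    have h3 : (σ2+1)/(σ2+E) - 1 = (1-E)/(σ2+E) := by field_simp; ring
    rw [h3] at hlog
    have hid : (Real.log (σ2+1) - 1/(σ2+1))/c - (1 - 1/(c*(σ2+1))) -
        ((Real.log (σ2+E) - E/(σ2+E))/c - (1 - 1/(c*(σ2+E)))) =
        (Real.log (σ2+1) - Real.log (σ2+E) - (1-E)/(σ2+E))/c := by
      field_simp
      ring
    have hnonpos : (Real.log (σ2+1) - Real.log (σ2+E) - (1-E)/(σ2+E))/c ≤ 0 :=
      div_nonpos_of_nonpos_of_nonneg (by linarith) hcpos.le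
    linarith [hid, hnonpos]
  -- Lemma C : phiLim 0 < phiLim 1
  have hcap : c < Real.log (σ2+1) - Real.log σ2 := by
    have e1 : (1:ℝ) + 1/σ2 = (σ2+1)/σ2 := by field_simp
    rw [e1, Real.logb, Real.log_div (by positivity) (ne_of_gt hσ2)] at hRC
    have h2 : (1:ℝ)/2 * ((Real.log (σ2+1) - Real.log σ2)/Real.log 2) =
        (Real.log (σ2+1) - Real.log σ2)/(2*Real.log 2) := by ring
    rw [h2] at hRC
    have h3 := (lt_div_iff₀ (by positivity : (0:ℝ) < 2*Real.log 2)).1 hRC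
    rw [hc]; linarith
  have hC : phiLim R σ2 0 < phiLim R σ2 1 := by
    rw [hphi 0 le_rfl, hphi 1 zero_le_one]
    have hmax1 : max 0 (1 - 1/(c*(σ2+1))) = 1 - 1/(c*(σ2+1)) := by
      apply max_eq_right
      have h1 : 1/(c*(σ2+1)) ≤ 1 := by
        rw [div_le_one (by positivity)]; exact hcb.le
      linarith
    have hmax0 : (0:ℝ) ≤ max 0 (1 - 1/(c*(σ2+0))) := le_max_left _ _
    rw [hmax1]
    have hid2 : (Real.log (σ2+1) - 1/(σ2+1))/c - (1 - 1/(c*(σ2+1))) -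
        Real.log σ2 / c = (Real.log (σ2+1) - Real.log σ2)/c - 1 := by
      field_simp
      ring
    have hpos : 0 < (Real.log (σ2+1) - Real.log σ2)/c - 1 := by
      rw [sub_pos, lt_div_iff₀ hcpos]
      linarith
    have hz : (Real.log (σ2+0) - 0/(σ2+0))/c = Real.log σ2 / c := by
      rw [add_zero, zero_div, sub_zero]
    rw [hz]
    linarith [hmax0, hid2, hpos]
  -- Lemma B : below the threshold
  have hB : ∀ E : ℝ, 0 < E → c*(σ2+E) < 1 → phiLim R σ2 0 < phiLim R σ2 E := by
    intro E hE hca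
    have haE : 0 < σ2 + E := by linarith
    rw [hphi 0 le_rfl, hphi E hE.le]
    have hmaxE : max 0 (1 - 1/(c*(σ2+E))) = 0 := by
      apply max_eq_left
      have h1 : 1 < 1/(c*(σ2+E)) := by
        rw [lt_div_iff₀ (by positivity)]; linarith
      linarith
    have hmax0 : max 0 (1 - 1/(c*(σ2+0))) = 0 := by
      apply max_eq_left
      have h0 : c*σ2 < 1 := by nlinarith
      have h1 : 1 < 1/(c*(σ2+0)) := by
        rw [add_zero, lt_div_iff₀ (by positivity)]; linarith
      linarith
    rw [hmaxE, hmax0]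
    have hlog : Real.log (σ2/(σ2+E)) < σ2/(σ2+E) - 1 := by
      apply Real.log_lt_sub_one_of_pos (by positivity)
      intro hcon
      have : σ2 = σ2 + E := by
        field_simp at hcon
        linarith
      linarith
    rw [Real.log_div (ne_of_gt hσ2) (ne_of_gt haE)] at hlog
    have h3 : σ2/(σ2+E) - 1 = -(E/(σ2+E)) := by field_simp; ring
    rw [h3] at hlog
    have hz : (Real.log (σ2+0) - 0/(σ2+0)) = Real.log σ2 := by
      rw [add_zero, zero_div, sub_zero]
    rw [hz, sub_zero, sub_zero]
    exact (div_lt_div_iff_of_pos_right hcpos).mpr (by linarith)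
  constructor
  · intro E hE
    obtain ⟨hE0, hE1⟩ := hE
    by_cases hca : c*(σ2+E) < 1
    · exact hB E hE0 hca
    · exact lt_of_lt_of_le hC (hA E hE0.le (not_lt.1 hca))
  · refine ⟨min 1 ((c*(σ2+1)-1)/c), lt_min one_pos (div_pos (by linarith) hcpos), ?_⟩
    intro E hE
    obtain ⟨hE0, hE1⟩ := hE
    have hδ1 : min 1 ((c*(σ2+1)-1)/c) ≤ 1 := min_le_left _ _
    have hδ2 : min 1 ((c*(σ2+1)-1)/c) ≤ (c*(σ2+1)-1)/c := min_le_right _ _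
    have hEnn : 0 ≤ E := by linarith
    apply hA E hEnn
    have h4 : c * ((c*(σ2+1)-1)/c) = c*(σ2+1)-1 := by field_simp
    nlinarith [mul_le_mul_of_nonneg_left hδ2 hcpos.le]
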